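/- Let q be a nonzero scalar and let u₁,v₁,u₂,v₂ be elements of a noncommutative algebra satisfying u₁v₁ = q²v₁u₁, u₂v₂ = q²v₂u₂, and all pairs with distinct indices commute (u₁u₂=u₂u₁, u₁v₂=v₂u₁, v₁u₂=u₂v₁, v₁v₂=v₂v₁). Define z₁₁ = u₁, z₁₂ = u₁u₂, z₂₁ = v₁u₁, z₂₂ = v₁u₁u₂ + v₂. Then these satisfy the GL_q(2) relations: z₁₁z₁₂ = z₁₂z₁₁, z₂₁z₂₂ = z₂₂z₂₁, z₁₁z₂₁ = q²z₂₁z₁₁, z₁₂z₂₂ = q²z₂₂z₁₂, z₁₂z₂₁ = q²z₂₁z₁₂, and z₁₁z₂₂ − z₁₂z₂₁ = z₂₂z₁₁ − z₂₁z₁₂. -/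
import Mathlib


/-- Gauss decomposition of `GL_q(2)`: the entries defined from two commuting
Weyl pairs satisfy the GL_q(2) relations. -/
theorem stmt0 {K R : Type*} [Field K] [Ring R] [Algebra K R]
    (q : K) (hq : q ≠ 0) (u₁ v₁ u₂ v₂ : R)
    (h1 : u₁ * v₁ = q ^ 2 • (v₁ * u₁))
    (h2 : u₂ * v₂ = q ^ 2 • (v₂ * u₂))
    (h3 : u₁ * u₂ = u₂ * u₁) (h4 : u₁ * v₂ = v₂ * u₁)
    (h5 : v₁ * u₂ = u₂ * v₁) (h6 : v₁ * v₂ = v₂ * v₁) :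
    let z₁₁ := u₁
    let z₁₂ := u₁ * u₂
    let z₂₁ := v₁ * u₁
    let z₂₂ := v₁ * u₁ * u₂ + v₂
    (z₁₁ * z₁₂ = z₁₂ * z₁₁) ∧ (z₂₁ * z₂₂ = z₂₂ * z₂₁) ∧
    (z₁₁ * z₂₁ = q ^ 2 • (z₂₁ * z₁₁)) ∧ (z₁₂ * z₂₂ = q ^ 2 • (z₂₂ * z₁₂)) ∧
    (z₁₂ * z₂₁ = q ^ 2 • (z₂₁ * z₁₂)) ∧
    (z₁₁ * z₂₂ - z₁₂ * z₂₁ = z₂₂ * z₁₁ - z₂₁ * z₁₂) := by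
  intro z₁₁ z₁₂ z₂₁ z₂₂
  have c13 : ∀ y : R, u₁ * (u₂ * y) = u₂ * (u₁ * y) := fun y => by
    rw [← mul_assoc, h3, mul_assoc]
  have c14 : ∀ y : R, u₁ * (v₂ * y) = v₂ * (u₁ * y) := fun y => by
    rw [← mul_assoc, h4, mul_assoc]
  have c15 : ∀ y : R, v₁ * (u₂ * y) = u₂ * (v₁ * y) := fun y => by
    rw [← mul_assoc, h5, mul_assoc]
  have c16 : ∀ y : R, v₁ * (v₂ * y) = v₂ * (v₁ * y) := fun y => by
    rw [← mul_assoc, h6, mul_assoc]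
  have w1 : ∀ y : R, u₁ * (v₁ * y) = q ^ 2 • (v₁ * (u₁ * y)) := fun y => by
    rw [← mul_assoc, h1, smul_mul_assoc, mul_assoc]
  simp only [z₁₁, z₁₂, z₂₁, z₂₂, mul_add, add_mul, smul_add, mul_assoc]
  refine ⟨?_, ?_, ?_, ?_, ?_, ?_⟩
  · rw [h3]
  · rw [← c15, ← h3, ← c16, ← h4]
  · rw [w1]
  · rw [← c15, w1, h2, mul_smul_comm, c14]
  · rw [← c15, w1, ← h3]
  · rw [← c15, ← h3, h4]; abel
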